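/- Let E be a finite set and 0 < h ≤ 1. Let F : ℝ^E × ℝ^E → ℂ be bounded and continuous, and suppose that for every (α, β) ∈ I_2(E) the partial derivative ∂_z^α ∂_ζ^β F exists, is continuous and bounded. Then sup_{(α,β)∈I_2(E)} h^{(|α|+|β|)/2} ‖∂_z^α ∂_ζ^β (T_h(E)F)‖_{L^∞} ≤ 2^{|E|} · sup_{(α,β)∈Ĩ_2(E)} h^{(|α|+|β|)/2} ‖∂_z^α ∂_ζ^β F‖_{L^∞}, where Ĩ_2(E) is the set of (α, β) ∈ I_2(E) such that α_j + β_j ≥ 1 for every j ∈ E. (Proposition 8.4, estimate (8.6).) -/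

import Mathlib

open MeasureTheory Real

/-- Partial derivative in the `j`-th `z`-coordinate. -/
noncomputable def pdZ {E : Type*} [Fintype E] [DecidableEq E] (j : E)
    (G : ((E → ℝ) × (E → ℝ)) → ℂ) : ((E → ℝ) × (E → ℝ)) → ℂ :=
  fun p => fderiv ℝ G p (Pi.single j 1, 0)

/-- Partial derivative in the `j`-th `ζ`-coordinate. -/
noncomputable def pdZeta {E : Type*} [Fintype E] [DecidableEq E] (j : E)
    (G : ((E → ℝ) × (E → ℝ)) → ℂ) : ((E → ℝ) × (E → ℝ)) → ℂ :=
  fun p => fderiv ℝ G p (0, Pi.single j 1)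

/-- The heat operator `e^{(h/4)Δ_j}`:
`(e^{(h/4)Δ_j}F)(z, ζ) = (πh)^{−1} ∫_{ℝ²} F(z + u e_j, ζ + v e_j) e^{−(u²+v²)/h} du dv`. -/
noncomputable def heatOp {E : Type*} [Fintype E] [DecidableEq E] (h : ℝ) (j : E)
    (F : ((E → ℝ) × (E → ℝ)) → ℂ) : ((E → ℝ) × (E → ℝ)) → ℂ :=
  fun p => (((Real.pi * h)⁻¹ : ℝ) : ℂ) *
    ∫ w : ℝ × ℝ,
      F (p.1 + w.1 • (Pi.single j 1 : E → ℝ), p.2 + w.2 • (Pi.single j 1 : E → ℝ)) *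
        Complex.exp (-(((w.1 ^ 2 + w.2 ^ 2) : ℝ) : ℂ) / h)

/-- `T_h(S)`, the composition over `j ∈ S` of the operators `I − e^{(h/4)Δ_j}`. -/
noncomputable def THeat {E : Type*} [Fintype E] [DecidableEq E] (h : ℝ) (S : Finset E)
    (F : ((E → ℝ) × (E → ℝ)) → ℂ) : ((E → ℝ) × (E → ℝ)) → ℂ :=
  S.toList.foldr (fun j G => G - heatOp h j G) F

section Gauss
variable {h : ℝ}

noncomputable def ker (h : ℝ) (w : ℝ × ℝ) : ℂ :=
  Complex.exp (-(((w.1 ^ 2 + w.2 ^ 2) : ℝ) : ℂ) / h)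

noncomputable def gker (h : ℝ) (w : ℝ × ℝ) : ℝ :=
  rexp (-(w.1 ^ 2 + w.2 ^ 2) / h)

lemma ker_eq (w : ℝ × ℝ) : ker h w = ((gker h w : ℝ) : ℂ) := by
  unfold ker gker
  have : (-(((w.1 ^ 2 + w.2 ^ 2) : ℝ) : ℂ) / (h:ℂ)) = ((-(w.1 ^ 2 + w.2 ^ 2) / h : ℝ) : ℂ) := by
    push_cast; ring
  rw [this, Complex.ofReal_exp]

lemma gker_pos (w : ℝ × ℝ) : 0 < gker h w := Real.exp_pos _

lemma norm_ker (w : ℝ × ℝ) : ‖ker h w‖ = gker h w := by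
  rw [ker_eq, Complex.norm_real, Real.norm_eq_abs]
  exact abs_of_pos (gker_pos w)

lemma continuous_ker : Continuous (ker h) := by
  unfold ker; fun_prop

lemma gker_prod (w : ℝ × ℝ) :
    gker h w = rexp (-(1/h) * w.1 ^ 2) * rexp (-(1/h) * w.2 ^ 2) := by
  rw [← Real.exp_add]; unfold gker; ring_nf

lemma integrable_gker (hh0 : 0 < h) : Integrable (gker h) := by
  have h1 : Integrable (fun x : ℝ => rexp (-(1/h) * x ^ 2)) :=
    integrable_exp_neg_mul_sq (by positivity)
  have h2 := h1.mul_prod h1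
  rw [← Measure.volume_eq_prod] at h2
  exact h2.congr (Filter.Eventually.of_forall fun w => (gker_prod w).symm)

lemma integral_gker (hh0 : 0 < h) : ∫ w : ℝ × ℝ, gker h w = π * h := by
  simp_rw [gker_prod]
  rw [show (volume : Measure (ℝ × ℝ)) = (volume : Measure ℝ).prod volume from
    Measure.volume_eq_prod ℝ ℝ]
  rw [MeasureTheory.integral_prod_mul (f := fun x : ℝ => rexp (-(1/h) * x ^ 2))
    (g := fun x : ℝ => rexp (-(1/h) * x ^ 2)), integral_gaussian]
  rw [Real.mul_self_sqrt (by positivity)]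
  field_simp

lemma integrable_ker (hh0 : 0 < h) : Integrable (ker h) := by
  refine (integrable_gker hh0).mono' continuous_ker.aestronglyMeasurable ?_
  exact Filter.Eventually.of_forall fun w => le_of_eq (norm_ker w)

lemma integral_ker (hh0 : 0 < h) : ∫ w : ℝ × ℝ, ker h w = ((π * h : ℝ) : ℂ) := by
  simp_rw [ker_eq]
  rw [← integral_gker hh0]
  exact integral_ofReal

lemma integrable_abs_gauss (hh0 : 0 < h) :
    Integrable (fun x : ℝ => |x| * rexp (-(1/h) * x ^ 2)) := by
  have h1 := (integrable_mul_exp_neg_mul_sq (b := 1/h) (by positivity)).abs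
  refine h1.congr (Filter.Eventually.of_forall fun x => ?_)
  simp [abs_mul, abs_of_pos (Real.exp_pos _)]

lemma integral_abs_gauss (hh0 : 0 < h) :
    ∫ x : ℝ, |x| * rexp (-(1/h) * x ^ 2) = h := by
  have hb : (0:ℝ) < 1/h := by positivity
  have key : ∫ x : ℝ in Set.Ioi (0:ℝ), x * rexp (-(1/h) * x ^ 2) = h / 2 := by
    have hc : ((1:ℂ)/h).re = 1/h := by simp
    have h1 := integral_mul_cexp_neg_mul_sq (b := (1/h : ℂ)) (by rw [hc]; exact hb)
    have h2 : ∫ x : ℝ in Set.Ioi (0:ℝ), ((x * rexp (-(1/h) * x ^ 2) : ℝ) : ℂ)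
        = ∫ r : ℝ in Set.Ioi (0:ℝ), (r : ℂ) * Complex.exp (-(1/h : ℂ) * (r:ℂ) ^ 2) := by
      refine integral_congr_ae (Filter.Eventually.of_forall fun x => ?_)
      push_cast [Complex.ofReal_exp]
      ring_nf
    rw [h1] at h2
    have h3 : ((2 : ℂ) * (1/h))⁻¹ = ((h/2 : ℝ) : ℂ) := by
      push_cast
      rw [mul_one_div, ← one_div, one_div_div]
    rw [h3] at h2
    have h5 := integral_ofReal (𝕜 := ℂ) (f := fun x : ℝ => x * rexp (-(1/h) * x ^ 2))
      (μ := volume.restrict (Set.Ioi 0))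
    exact Complex.ofReal_inj.mp (h5.symm.trans h2)
  have h4 := integral_comp_abs (f := fun y : ℝ => y * rexp (-(1/h) * y ^ 2))
  simp only [sq_abs] at h4
  rw [h4, key]
  ring

lemma integrable_absfst_gker (hh0 : 0 < h) :
    Integrable (fun w : ℝ × ℝ => |w.1| * gker h w) := by
  have h1 := integrable_abs_gauss hh0
  have h2 : Integrable (fun x : ℝ => rexp (-(1/h) * x ^ 2)) :=
    integrable_exp_neg_mul_sq (by positivity)
  have h3 := h1.mul_prod h2
  rw [← Measure.volume_eq_prod] at h3
  refine h3.congr (Filter.Eventually.of_forall fun w => ?_)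
  simp only [gker_prod]; ring

lemma integrable_abssnd_gker (hh0 : 0 < h) :
    Integrable (fun w : ℝ × ℝ => |w.2| * gker h w) := by
  have h1 := integrable_abs_gauss hh0
  have h2 : Integrable (fun x : ℝ => rexp (-(1/h) * x ^ 2)) :=
    integrable_exp_neg_mul_sq (by positivity)
  have h3 := h2.mul_prod h1
  rw [← Measure.volume_eq_prod] at h3
  refine h3.congr (Filter.Eventually.of_forall fun w => ?_)
  simp only [gker_prod]; ring

lemma integral_absfst_gker (hh0 : 0 < h) :
    ∫ w : ℝ × ℝ, |w.1| * gker h w = h * Real.sqrt (π * h) := by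
  simp_rw [gker_prod, show ∀ w : ℝ × ℝ, |w.1| * (rexp (-(1/h) * w.1 ^ 2) * rexp (-(1/h) * w.2 ^ 2))
      = (|w.1| * rexp (-(1/h) * w.1 ^ 2)) * rexp (-(1/h) * w.2 ^ 2) from fun w => by ring]
  rw [show (volume : Measure (ℝ × ℝ)) = (volume : Measure ℝ).prod volume from
    Measure.volume_eq_prod ℝ ℝ]
  rw [MeasureTheory.integral_prod_mul (f := fun x : ℝ => |x| * rexp (-(1/h) * x ^ 2))
    (g := fun x : ℝ => rexp (-(1/h) * x ^ 2)), integral_gaussian, integral_abs_gauss hh0]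
  rw [one_div, show π / h⁻¹ = π * h by field_simp]

lemma integral_abssnd_gker (hh0 : 0 < h) :
    ∫ w : ℝ × ℝ, |w.2| * gker h w = h * Real.sqrt (π * h) := by
  simp_rw [gker_prod, show ∀ w : ℝ × ℝ, |w.2| * (rexp (-(1/h) * w.1 ^ 2) * rexp (-(1/h) * w.2 ^ 2))
      = rexp (-(1/h) * w.1 ^ 2) * (|w.2| * rexp (-(1/h) * w.2 ^ 2)) from fun w => by ring]
  rw [show (volume : Measure (ℝ × ℝ)) = (volume : Measure ℝ).prod volume from
    Measure.volume_eq_prod ℝ ℝ]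
  rw [MeasureTheory.integral_prod_mul (g := fun x : ℝ => |x| * rexp (-(1/h) * x ^ 2))
    (f := fun x : ℝ => rexp (-(1/h) * x ^ 2)), integral_gaussian, integral_abs_gauss hh0]
  rw [one_div, show π / h⁻¹ = π * h by field_simp]; ring

end Gauss


section Heat
variable {E : Type*} [Fintype E] [DecidableEq E] {h : ℝ}

/-- displacement vector -/
noncomputable def wv (j : E) (w : ℝ × ℝ) : (E → ℝ) × (E → ℝ) :=
  (w.1 • (Pi.single j 1 : E → ℝ), w.2 • (Pi.single j 1 : E → ℝ))

lemma continuous_wv (j : E) : Continuous (wv j) := by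
  unfold wv
  exact (continuous_fst.smul continuous_const).prodMk (continuous_snd.smul continuous_const)

lemma heatOp_eq (j : E) (G : ((E → ℝ) × (E → ℝ)) → ℂ) (p : (E → ℝ) × (E → ℝ)) :
    heatOp h j G p = (((Real.pi * h)⁻¹ : ℝ) : ℂ) * ∫ w : ℝ × ℝ, G (p + wv j w) * ker h w := rfl

lemma integrable_integrand (hh0 : 0 < h) (j : E) {G : ((E → ℝ) × (E → ℝ)) → ℂ}
    (hGc : Continuous G) {C : ℝ} (hGb : ∀ p, ‖G p‖ ≤ C) (p : (E → ℝ) × (E → ℝ)) :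
    Integrable (fun w : ℝ × ℝ => G (p + wv j w) * ker h w) := by
  refine (integrable_ker hh0).bdd_mul ?_ (Filter.Eventually.of_forall fun w => hGb _)
  exact (hGc.comp (continuous_const.add (continuous_wv j))).aestronglyMeasurable

lemma norm_heatOp_le (hh0 : 0 < h) (j : E) {G : ((E → ℝ) × (E → ℝ)) → ℂ}
    (hGc : Continuous G) {C : ℝ} (hGb : ∀ p, ‖G p‖ ≤ C) (p : (E → ℝ) × (E → ℝ)) :
    ‖heatOp h j G p‖ ≤ C := by
  have hπh : 0 < π * h := by positivity
  rw [heatOp_eq, norm_mul, Complex.norm_real, Real.norm_eq_abs, abs_of_pos (by positivity)]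
  have h1 : ‖∫ w : ℝ × ℝ, G (p + wv j w) * ker h w‖ ≤ ∫ w : ℝ × ℝ, C * gker h w := by
    refine norm_integral_le_of_norm_le ((integrable_gker hh0).const_mul C)
      (Filter.Eventually.of_forall fun w => ?_)
    rw [norm_mul, norm_ker]
    exact mul_le_mul_of_nonneg_right (hGb _) (gker_pos w).le
  rw [integral_const_mul, integral_gker hh0] at h1
  calc (π * h)⁻¹ * ‖∫ w : ℝ × ℝ, G (p + wv j w) * ker h w‖
      ≤ (π * h)⁻¹ * (C * (π * h)) :=
        mul_le_mul_of_nonneg_left h1 (by positivity)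
    _ = C := by field_simp

lemma continuous_heatOp (hh0 : 0 < h) (j : E) {G : ((E → ℝ) × (E → ℝ)) → ℂ}
    (hGc : Continuous G) {C : ℝ} (hGb : ∀ p, ‖G p‖ ≤ C) :
    Continuous (heatOp h j G) := by
  have : Continuous fun p : (E → ℝ) × (E → ℝ) => ∫ w : ℝ × ℝ, G (p + wv j w) * ker h w := by
    refine continuous_iff_continuousAt.mpr fun p => ?_
    refine continuousAt_of_dominated (bound := fun w => C * gker h w) ?_ ?_
      ((integrable_gker hh0).const_mul C) ?_
    · exact Filter.Eventually.of_forall fun q =>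
        ((hGc.comp (continuous_const.add (continuous_wv j))).mul continuous_ker).aestronglyMeasurable
    · refine Filter.Eventually.of_forall fun q => Filter.Eventually.of_forall fun w => ?_
      rw [norm_mul, norm_ker]
      exact mul_le_mul_of_nonneg_right (hGb _) (gker_pos w).le
    · refine Filter.Eventually.of_forall fun w => ?_
      exact ((hGc.comp (continuous_id.add continuous_const)).mul continuous_const).continuousAt
  have h2 : Continuous fun p : (E → ℝ) × (E → ℝ) =>
      (((Real.pi * h)⁻¹ : ℝ) : ℂ) * ∫ w : ℝ × ℝ, G (p + wv j w) * ker h w :=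
    continuous_const.mul this
  exact h2.congr fun p => (heatOp_eq j G p).symm

/-- Bounded continuity. -/
structure BCf {E : Type*} [Fintype E] [DecidableEq E] (G : ((E → ℝ) × (E → ℝ)) → ℂ) : Prop where
  cont : Continuous G
  bdd : ∃ C, ∀ p, ‖G p‖ ≤ C

lemma BCf.heat (hh0 : 0 < h) (j : E) {G : ((E → ℝ) × (E → ℝ)) → ℂ} (hG : BCf G) :
    BCf (heatOp h j G) := by
  obtain ⟨C, hC⟩ := hG.bdd
  exact ⟨continuous_heatOp hh0 j hG.cont hC, C, fun p => norm_heatOp_le hh0 j hG.cont hC p⟩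

lemma BCf.step (hh0 : 0 < h) (j : E) {G : ((E → ℝ) × (E → ℝ)) → ℂ} (hG : BCf G) :
    BCf (G - heatOp h j G) := by
  obtain ⟨C, hC⟩ := hG.bdd
  refine ⟨hG.cont.sub (hG.heat hh0 j).cont, C + C, fun p => ?_⟩
  calc ‖(G - heatOp h j G) p‖ = ‖G p - heatOp h j G p‖ := rfl
    _ ≤ ‖G p‖ + ‖heatOp h j G p‖ := norm_sub_le _ _
    _ ≤ C + C := add_le_add (hC p) (norm_heatOp_le hh0 j hG.cont hC p)

lemma BCf.foldr (hh0 : 0 < h) (L : List E) {G : ((E → ℝ) × (E → ℝ)) → ℂ} (hG : BCf G) :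
    BCf (L.foldr (fun j G => G - heatOp h j G) G) := by
  induction L with
  | nil => exact hG
  | cons j L ih => exact ih.step hh0 j

end Heat

section LDsec
variable {E : Type*} [Fintype E] [DecidableEq E] {h : ℝ}

/-- `G` has uniform line derivative `Gv` in direction `v`, with both bounded continuous. -/
structure LDf {E : Type*} [Fintype E] [DecidableEq E] (v : (E → ℝ) × (E → ℝ))
    (G Gv : ((E → ℝ) × (E → ℝ)) → ℂ) : Prop where
  bcG : BCf G
  bcGv : BCf Gv
  deriv : ∀ q (t : ℝ), HasDerivAt (fun s : ℝ => G (q + s • v)) (Gv (q + t • v)) t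

lemma LDf.heat {v : (E → ℝ) × (E → ℝ)} {G Gv : ((E → ℝ) × (E → ℝ)) → ℂ}
    (hh0 : 0 < h) (j : E) (ld : LDf v G Gv) : LDf v (heatOp h j G) (heatOp h j Gv) := by
  refine ⟨ld.bcG.heat hh0 j, ld.bcGv.heat hh0 j, ?_⟩
  intro q t
  obtain ⟨C, hC⟩ := ld.bcG.bdd
  obtain ⟨Cv, hCv⟩ := ld.bcGv.bdd
  have key := (hasDerivAt_integral_of_dominated_loc_of_deriv_le (μ := (volume : Measure (ℝ × ℝ)))
    (x₀ := t) (s := Metric.ball t 1) (Metric.ball_mem_nhds t one_pos)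
    (F := fun s w => G ((q + s • v) + wv j w) * ker h w)
    (F' := fun s w => Gv ((q + s • v) + wv j w) * ker h w)
    (bound := fun w => Cv * gker h w)
    (Filter.Eventually.of_forall fun s =>
      (by have h1 := ld.bcG.cont; have h2 := continuous_wv (E := E) j; have h3 := continuous_ker (h := h); exact Continuous.aestronglyMeasurable (by fun_prop)))
    (integrable_integrand hh0 j ld.bcG.cont hC (q + t • v))
    ((ld.bcGv.cont.comp (continuous_const.add (continuous_wv j))).mul
        continuous_ker).aestronglyMeasurable
    (Filter.Eventually.of_forall fun w => fun s _ => by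
      rw [norm_mul, norm_ker]
      exact mul_le_mul_of_nonneg_right (hCv _) (gker_pos w).le)
    ((integrable_gker hh0).const_mul Cv)
    (Filter.Eventually.of_forall fun w => fun s _ => by
      have h1 := (ld.deriv (q + wv j w) s).mul_const (ker h w)
      have h2 : (fun s : ℝ => G ((q + wv j w) + s • v) * ker h w)
          = fun s : ℝ => G ((q + s • v) + wv j w) * ker h w := by
        funext s; rw [add_right_comm]
      rw [h2, add_right_comm] at h1
      exact h1)).2
  have h3 := key.const_mul (((Real.pi * h)⁻¹ : ℝ) : ℂ)
  have h4 : (fun s : ℝ => (((Real.pi * h)⁻¹ : ℝ) : ℂ) *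
      ∫ w : ℝ × ℝ, G ((q + s • v) + wv j w) * ker h w)
      = fun s : ℝ => heatOp h j G (q + s • v) := by
    funext s; rw [heatOp_eq]
  rw [h4] at h3
  rw [heatOp_eq]
  exact h3

lemma LDf.step {v : (E → ℝ) × (E → ℝ)} {G Gv : ((E → ℝ) × (E → ℝ)) → ℂ}
    (hh0 : 0 < h) (j : E) (ld : LDf v G Gv) :
    LDf v (G - heatOp h j G) (Gv - heatOp h j Gv) := by
  refine ⟨ld.bcG.step hh0 j, ld.bcGv.step hh0 j, ?_⟩
  intro q t
  have h1 := (ld.deriv q t).sub ((ld.heat hh0 j).deriv q t)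
  simpa [Pi.sub_def] using h1

lemma LDf.foldr {v : (E → ℝ) × (E → ℝ)} {G Gv : ((E → ℝ) × (E → ℝ)) → ℂ}
    (hh0 : 0 < h) (L : List E) (ld : LDf v G Gv) :
    LDf v (L.foldr (fun j G => G - heatOp h j G) G)
      (L.foldr (fun j G => G - heatOp h j G) Gv) := by
  induction L with
  | nil => exact ld
  | cons j L ih => exact ih.step hh0 j

/-- FTC difference bound along a line. -/
lemma LDf.diff_bound {v : (E → ℝ) × (E → ℝ)} {G Gv : ((E → ℝ) × (E → ℝ)) → ℂ}
    (ld : LDf v G Gv) {Cv : ℝ} (hCv : ∀ q, ‖Gv q‖ ≤ Cv)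
    (p : (E → ℝ) × (E → ℝ)) (r : ℝ) :
    ‖G (p + r • v) - G p‖ ≤ |r| * Cv := by
  have hder : ∀ t : ℝ, HasDerivAt (fun s : ℝ => G (p + (s * r) • v))
      (r • Gv (p + (t * r) • v)) t := by
    intro t
    have h1 := ld.deriv p (t * r)
    have h2 : HasDerivAt (fun s : ℝ => s * r) r t := hasDerivAt_mul_const r
    have h3 := HasDerivAt.scomp (𝕜 := ℝ) t h1 h2
    simpa [Function.comp_def] using h3
  have hint : IntervalIntegrable (fun t : ℝ => r • Gv (p + (t * r) • v)) volume 0 1 := by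
    apply Continuous.intervalIntegrable
    exact (ld.bcGv.cont.comp (continuous_const.add
      (((continuous_id.mul continuous_const)).smul continuous_const))).const_smul r
  have hftc := intervalIntegral.integral_eq_sub_of_hasDerivAt
    (f := fun s : ℝ => G (p + (s * r) • v)) (fun t _ => hder t) hint
  have hbound : ‖∫ t in (0:ℝ)..1, r • Gv (p + (t * r) • v)‖ ≤ (|r| * Cv) * |1 - 0| := by
    refine intervalIntegral.norm_integral_le_of_norm_le_const fun t _ => ?_
    rw [norm_smul, Real.norm_eq_abs]
    exact mul_le_mul_of_nonneg_left (hCv _) (abs_nonneg r)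
  rw [hftc] at hbound
  simpa using hbound

/-- If `G` is differentiable, `fderiv` in direction `v` agrees with the line derivative. -/
lemma fderiv_eq_of_LDf {v : (E → ℝ) × (E → ℝ)} {G Gv : ((E → ℝ) × (E → ℝ)) → ℂ}
    (ld : LDf v G Gv) (hG : Differentiable ℝ G) (p : (E → ℝ) × (E → ℝ)) :
    fderiv ℝ G p v = Gv p := by
  have hline : HasDerivAt (fun s : ℝ => p + s • v) v 0 := by
    simpa using ((hasDerivAt_id (0:ℝ)).smul_const v).const_add p
  have h1 : HasDerivAt (fun s : ℝ => G (p + s • v)) (fderiv ℝ G p v) 0 := by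
    have h2 := ((hG (p + (0:ℝ) • v)).hasFDerivAt).comp_hasDerivAt 0 hline
    simpa [Function.comp_def] using h2
  have h3 := ld.deriv p 0
  have h4 : p + (0:ℝ) • v = p := by simp
  rw [h4] at h3
  exact (h1.unique h3)

end LDsec


/-- **Proposition 8.4, estimate (8.6).**  Let `E` be finite, `0 < h ≤ 1`, and let
`F : ℝ^E × ℝ^E → ℂ` be bounded continuous with continuous bounded partial derivatives
`∂_z^α ∂_ζ^β F` (encoded by `D`) for all `(α,β) ∈ I₂(E)`.  Then, `D'` denoting the
partial derivatives of `T_h(E)F`,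
`sup_{(α,β)∈I₂(E)} h^{(|α|+|β|)/2} ‖∂_z^α ∂_ζ^β (T_h(E)F)‖_∞
  ≤ 2^{|E|} sup_{(α,β)∈Ĩ₂(E)} h^{(|α|+|β|)/2} ‖∂_z^α ∂_ζ^β F‖_∞`,
where `Ĩ₂(E)` consists of the `(α,β) ∈ I₂(E)` with `α_j + β_j ≥ 1` for all `j ∈ E`. -/
theorem THeat_derivative_bound
    (E : Type*) [Fintype E] [DecidableEq E] (h : ℝ) (hh0 : 0 < h) (hh1 : h ≤ 1)
    (F : ((E → ℝ) × (E → ℝ)) → ℂ) (hFcont : Continuous F)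
    (hFbdd : ∃ C, ∀ p, ‖F p‖ ≤ C)
    (D : (E → ℕ) → (E → ℕ) → ((E → ℝ) × (E → ℝ)) → ℂ)
    (hD00 : D 0 0 = F)
    (hDz : ∀ (α β : E → ℕ) (j : E),
      (∀ k, (α + Pi.single j 1 : E → ℕ) k ≤ 2) → (∀ k, β k ≤ 2) →
      Differentiable ℝ (D α β) ∧ D (α + Pi.single j 1) β = pdZ j (D α β))
    (hDzeta : ∀ (α β : E → ℕ) (j : E),
      (∀ k, α k ≤ 2) → (∀ k, (β + Pi.single j 1 : E → ℕ) k ≤ 2) →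
      Differentiable ℝ (D α β) ∧ D α (β + Pi.single j 1) = pdZeta j (D α β))
    (hDcont : ∀ (α β : E → ℕ), (∀ k, α k ≤ 2) → (∀ k, β k ≤ 2) →
      Continuous (D α β))
    (hDbdd : ∀ (α β : E → ℕ), (∀ k, α k ≤ 2) → (∀ k, β k ≤ 2) →
      ∃ C, ∀ p, ‖D α β p‖ ≤ C)
    -- `D'` encodes the partial derivatives of `T_h(E) F`
    (D' : (E → ℕ) → (E → ℕ) → ((E → ℝ) × (E → ℝ)) → ℂ)
    (hD'00 : D' 0 0 = THeat h Finset.univ F)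
    (hD'z : ∀ (α β : E → ℕ) (j : E),
      (∀ k, (α + Pi.single j 1 : E → ℕ) k ≤ 2) → (∀ k, β k ≤ 2) →
      Differentiable ℝ (D' α β) ∧ D' (α + Pi.single j 1) β = pdZ j (D' α β))
    (hD'zeta : ∀ (α β : E → ℕ) (j : E),
      (∀ k, α k ≤ 2) → (∀ k, (β + Pi.single j 1 : E → ℕ) k ≤ 2) →
      Differentiable ℝ (D' α β) ∧ D' α (β + Pi.single j 1) = pdZeta j (D' α β)) :
    ∀ (αβ : (E → Fin 3) × (E → Fin 3)) (p : (E → ℝ) × (E → ℝ)),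
      Real.sqrt h ^ ((∑ j, (αβ.1 j : ℕ)) + ∑ j, (αβ.2 j : ℕ)) *
          ‖D' (fun j => (αβ.1 j : ℕ)) (fun j => (αβ.2 j : ℕ)) p‖ ≤
        2 ^ Fintype.card E *
          ⨆ ab : {ab : (E → Fin 3) × (E → Fin 3) //
              ∀ j, 1 ≤ (ab.1 j : ℕ) + (ab.2 j : ℕ)},
            Real.sqrt h ^ ((∑ j, (ab.1.1 j : ℕ)) + ∑ j, (ab.1.2 j : ℕ)) *
              ⨆ q, ‖D (fun j => (ab.1.1 j : ℕ)) (fun j => (ab.1.2 j : ℕ)) q‖ := by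
  have hπ1 : (1:ℝ) ≤ π := by linarith [Real.pi_gt_three]
  have hπh : (0:ℝ) < π * h := by positivity
  have hs : (0:ℝ) < Real.sqrt h := Real.sqrt_pos.mpr hh0
  have bcD : ∀ α β : E → ℕ, (∀ k, α k ≤ 2) → (∀ k, β k ≤ 2) → BCf (D α β) :=
    fun α β hα hβ => ⟨hDcont α β hα hβ, hDbdd α β hα hβ⟩
  have hle1 : ∀ (α : E → ℕ) (j : E), (∀ k, (α + Pi.single j 1 : E → ℕ) k ≤ 2) →
      ∀ k, α k ≤ 2 := by
    intro α j hα k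
    have h1 := hα k
    simp only [Pi.add_apply] at h1
    omega
  -- base line-derivative facts in the two coordinate directions
  have ldDz : ∀ (α β : E → ℕ) (j : E), (∀ k, (α + Pi.single j 1 : E → ℕ) k ≤ 2) →
      (∀ k, β k ≤ 2) →
      LDf ((Pi.single j 1 : E → ℝ), (0 : E → ℝ)) (D α β) (D (α + Pi.single j 1) β) := by
    intro α β j hα hβ
    obtain ⟨hdiff, heq⟩ := hDz α β j hα hβ
    refine ⟨bcD α β (hle1 α j hα) hβ, bcD _ β hα hβ, ?_⟩
    intro q t
    have hline : HasDerivAt (fun s : ℝ => q + s • ((Pi.single j 1 : E → ℝ), (0 : E → ℝ)))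
        ((Pi.single j 1 : E → ℝ), (0 : E → ℝ)) t := by
      simpa using ((hasDerivAt_id t).smul_const
        ((Pi.single j 1 : E → ℝ), (0 : E → ℝ))).const_add q
    have h2 := ((hdiff (q + t • ((Pi.single j 1 : E → ℝ), (0 : E → ℝ)))).hasFDerivAt).comp_hasDerivAt t hline
    rw [heq]
    simpa [Function.comp_def, pdZ] using h2
  have ldDzeta : ∀ (α β : E → ℕ) (j : E), (∀ k, α k ≤ 2) →
      (∀ k, (β + Pi.single j 1 : E → ℕ) k ≤ 2) →
      LDf ((0 : E → ℝ), (Pi.single j 1 : E → ℝ)) (D α β) (D α (β + Pi.single j 1)) := by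
    intro α β j hα hβ
    obtain ⟨hdiff, heq⟩ := hDzeta α β j hα hβ
    refine ⟨bcD α β hα (hle1 β j hβ), bcD α _ hα hβ, ?_⟩
    intro q t
    have hline : HasDerivAt (fun s : ℝ => q + s • ((0 : E → ℝ), (Pi.single j 1 : E → ℝ)))
        ((0 : E → ℝ), (Pi.single j 1 : E → ℝ)) t := by
      simpa using ((hasDerivAt_id t).smul_const
        ((0 : E → ℝ), (Pi.single j 1 : E → ℝ))).const_add q
    have h2 := ((hdiff (q + t • ((0 : E → ℝ), (Pi.single j 1 : E → ℝ)))).hasFDerivAt).comp_hasDerivAt t hline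
    rw [heq]
    simpa [Function.comp_def, pdZeta] using h2
  -- Step 1: D' is THeat applied to D
  have hrep : ∀ (n : ℕ) (α β : E → ℕ), ((∑ k, α k) + ∑ k, β k = n) →
      (∀ k, α k ≤ 2) → (∀ k, β k ≤ 2) → D' α β = THeat h Finset.univ (D α β) := by
    intro n
    induction n with
    | zero =>
      intro α β hn hα hβ
      have hα0 : α = 0 := by
        funext k
        have h1 : ∑ k, α k = 0 := by omega
        exact Finset.sum_eq_zero_iff.mp h1 k (Finset.mem_univ k)
      have hβ0 : β = 0 := by
        funext k
        have h1 : ∑ k, β k = 0 := by omega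
        exact Finset.sum_eq_zero_iff.mp h1 k (Finset.mem_univ k)
      rw [hα0, hβ0, hD00, hD'00]
    | succ n ih =>
      intro α β hn hα hβ
      by_cases hz : ∃ j, α j ≠ 0
      · obtain ⟨j, hj⟩ := hz
        have hαeq : (α - Pi.single j 1) + Pi.single j 1 = α := by
          funext k
          simp only [Pi.add_apply, Pi.sub_apply]
          by_cases hk : k = j
          · subst hk; rw [Pi.single_eq_same]; omega
          · rw [Pi.single_eq_of_ne hk]; omega
        set α' : E → ℕ := α - Pi.single j 1 with hα'def
        have hα'le : ∀ k, (α' + Pi.single j 1 : E → ℕ) k ≤ 2 := by rw [hαeq]; exact hα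
        obtain ⟨hdiff', heq'⟩ := hD'z α' β j hα'le hβ
        have hsum1 : ∑ k, (α' + Pi.single j 1 : E → ℕ) k = (∑ k, α' k) + 1 := by
          simp only [Pi.add_apply, Finset.sum_add_distrib]
          rw [Finset.sum_pi_single']
          simp
        have hsum : (∑ k, α' k) + ∑ k, β k = n := by
          rw [hαeq] at hsum1; omega
        have ihr := ih α' β hsum (hle1 α' j hα'le) hβ
        have ld := (ldDz α' β j hα'le hβ).foldr hh0 Finset.univ.toList
        have hDiff : Differentiable ℝ (THeat h Finset.univ (D α' β)) := ihr ▸ hdiff'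
        have hcomm : pdZ j (THeat h Finset.univ (D α' β))
            = THeat h Finset.univ (D (α' + Pi.single j 1) β) := by
          funext q
          exact fderiv_eq_of_LDf ld hDiff q
        rw [← hαeq, heq', ihr, hcomm]
      · have hβz : ∃ j, β j ≠ 0 := by
          push_neg at hz
          by_contra hcon
          push_neg at hcon
          have h1 : ∑ k, α k = 0 := Finset.sum_eq_zero fun k _ => hz k
          have h2 : ∑ k, β k = 0 := Finset.sum_eq_zero fun k _ => hcon k
          omega
        obtain ⟨j, hj⟩ := hβz
        have hβeq : (β - Pi.single j 1) + Pi.single j 1 = β := by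
          funext k
          simp only [Pi.add_apply, Pi.sub_apply]
          by_cases hk : k = j
          · subst hk; rw [Pi.single_eq_same]; omega
          · rw [Pi.single_eq_of_ne hk]; omega
        set β' : E → ℕ := β - Pi.single j 1 with hβ'def
        have hβ'le : ∀ k, (β' + Pi.single j 1 : E → ℕ) k ≤ 2 := by rw [hβeq]; exact hβ
        obtain ⟨hdiff', heq'⟩ := hD'zeta α β' j hα hβ'le
        have hsum1 : ∑ k, (β' + Pi.single j 1 : E → ℕ) k = (∑ k, β' k) + 1 := by
          simp only [Pi.add_apply, Finset.sum_add_distrib]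
          rw [Finset.sum_pi_single']
          simp
        have hsum : (∑ k, α k) + ∑ k, β' k = n := by
          rw [hβeq] at hsum1; omega
        have ihr := ih α β' hsum hα (hle1 β' j hβ'le)
        have ld := (ldDzeta α β' j hα hβ'le).foldr hh0 Finset.univ.toList
        have hDiff : Differentiable ℝ (THeat h Finset.univ (D α β')) := ihr ▸ hdiff'
        have hcomm : pdZeta j (THeat h Finset.univ (D α β'))
            = THeat h Finset.univ (D α (β' + Pi.single j 1)) := by
          funext q
          exact fderiv_eq_of_LDf ld hDiff q
        rw [← hβeq, heq', ihr, hcomm]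
  -- now the pointwise estimate
  intro αβ p
  set M : ℝ := ⨆ ab : {ab : (E → Fin 3) × (E → Fin 3) //
      ∀ j, 1 ≤ (ab.1 j : ℕ) + (ab.2 j : ℕ)},
    Real.sqrt h ^ ((∑ j, (ab.1.1 j : ℕ)) + ∑ j, (ab.1.2 j : ℕ)) *
      ⨆ q, ‖D (fun j => (ab.1.1 j : ℕ)) (fun j => (ab.1.2 j : ℕ)) q‖ with hMdef
  have hM0 : 0 ≤ M := by
    rw [hMdef]
    exact Real.iSup_nonneg fun ab => mul_nonneg (pow_nonneg (Real.sqrt_nonneg h) _)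
      (Real.iSup_nonneg fun q => norm_nonneg _)
  have hMle : ∀ (a b : E → Fin 3), (∀ jj, 1 ≤ (a jj : ℕ) + (b jj : ℕ)) →
      Real.sqrt h ^ ((∑ j, (a j : ℕ)) + ∑ j, (b j : ℕ)) *
        (⨆ q, ‖D (fun j => (a j : ℕ)) (fun j => (b j : ℕ)) q‖) ≤ M := by
    intro a b hab1
    rw [hMdef]
    exact le_ciSup (f := fun ab : {ab : (E → Fin 3) × (E → Fin 3) //
        ∀ j, 1 ≤ (ab.1 j : ℕ) + (ab.2 j : ℕ)} =>
      Real.sqrt h ^ ((∑ j, (ab.1.1 j : ℕ)) + ∑ j, (ab.1.2 j : ℕ)) *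
        ⨆ q, ‖D (fun j => (ab.1.1 j : ℕ)) (fun j => (ab.1.2 j : ℕ)) q‖)
      (Set.Finite.bddAbove (Set.finite_range _)) ⟨(a, b), hab1⟩
  have hinner : ∀ (α β : E → ℕ), (∀ k, α k ≤ 2) → (∀ k, β k ≤ 2) →
      ∀ q, ‖D α β q‖ ≤ ⨆ q', ‖D α β q'‖ := by
    intro α β hα hβ q
    obtain ⟨C, hC⟩ := hDbdd α β hα hβ
    have hbd : BddAbove (Set.range fun q' => ‖D α β q'‖) := by
      refine ⟨C, ?_⟩
      rintro x ⟨q', rfl⟩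
      exact hC q'
    exact le_ciSup hbd q
  -- Step 2: the inductive estimate
  have key : ∀ (L : List E) (α β : E → ℕ), (∀ k, α k ≤ 2) → (∀ k, β k ≤ 2) →
      (∀ k, k ∉ L → 1 ≤ α k + β k) → ∀ q,
      Real.sqrt h ^ ((∑ k, α k) + ∑ k, β k) *
        ‖(L.foldr (fun j G => G - heatOp h j G) (D α β)) q‖ ≤ 2 ^ L.length * M := by
    intro L
    induction L with
    | nil =>
      intro α β hα hβ hab q
      simp only [List.foldr_nil, List.length_nil, pow_zero, one_mul]
      have ha3 : ∀ k, α k < 3 := fun k => by have := hα k; omega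
      have hb3 : ∀ k, β k < 3 := fun k => by have := hβ k; omega
      have h1 := hMle (fun k => (⟨α k, ha3 k⟩ : Fin 3)) (fun k => (⟨β k, hb3 k⟩ : Fin 3))
        (fun jj => by simpa using hab jj List.not_mem_nil)
      simp only [Fin.val_mk] at h1
      exact le_trans (mul_le_mul_of_nonneg_left (hinner α β hα hβ q)
        (pow_nonneg (Real.sqrt_nonneg h) _)) h1
    | cons j L ih =>
      intro α β hα hβ hab q
      simp only [List.foldr_cons, List.length_cons]
      set k0 := (∑ k, α k) + ∑ k, β k with hk0
      set G := L.foldr (fun j G => G - heatOp h j G) (D α β) with hGdef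
      have hBCG : BCf G := BCf.foldr hh0 L (bcD α β hα hβ)
      by_cases hj1 : 1 ≤ α j + β j
      · have hab' : ∀ k, k ∉ L → 1 ≤ α k + β k := by
          intro k hk
          by_cases hkj : k = j
          · subst hkj; exact hj1
          · exact hab k (by simp [hk, hkj])
        have ihq := ih α β hα hβ hab'
        have hGb : ∀ q', ‖G q'‖ ≤ 2 ^ L.length * M / Real.sqrt h ^ k0 := by
          intro q'
          rw [le_div_iff₀ (pow_pos hs k0)]
          calc ‖G q'‖ * Real.sqrt h ^ k0 = Real.sqrt h ^ k0 * ‖G q'‖ := mul_comm _ _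
            _ ≤ 2 ^ L.length * M := ihq q'
        have hH := norm_heatOp_le hh0 j hBCG.cont hGb q
        have hstep : ‖G q - heatOp h j G q‖ ≤ 2 * (2 ^ L.length * M / Real.sqrt h ^ k0) := by
          calc ‖G q - heatOp h j G q‖ ≤ ‖G q‖ + ‖heatOp h j G q‖ := norm_sub_le _ _
            _ ≤ 2 ^ L.length * M / Real.sqrt h ^ k0 + 2 ^ L.length * M / Real.sqrt h ^ k0 :=
              add_le_add (hGb q) hH
            _ = 2 * (2 ^ L.length * M / Real.sqrt h ^ k0) := by ring
        calc Real.sqrt h ^ k0 * ‖(G - heatOp h j G) q‖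
            = Real.sqrt h ^ k0 * ‖G q - heatOp h j G q‖ := rfl
          _ ≤ Real.sqrt h ^ k0 * (2 * (2 ^ L.length * M / Real.sqrt h ^ k0)) :=
              mul_le_mul_of_nonneg_left hstep (by positivity)
          _ = 2 ^ (L.length + 1) * M := by
              rw [pow_succ]
              field_simp
      · push_neg at hj1
        have hαj : α j = 0 := by omega
        have hβj : β j = 0 := by omega
        have hα1 : ∀ k, (α + Pi.single j 1 : E → ℕ) k ≤ 2 := by
          intro k
          simp only [Pi.add_apply]
          by_cases hk : k = j
          · subst hk; rw [Pi.single_eq_same]; omega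
          · rw [Pi.single_eq_of_ne hk]; simpa using hα k
        have hβ1 : ∀ k, (β + Pi.single j 1 : E → ℕ) k ≤ 2 := by
          intro k
          simp only [Pi.add_apply]
          by_cases hk : k = j
          · subst hk; rw [Pi.single_eq_same]; omega
          · rw [Pi.single_eq_of_ne hk]; simpa using hβ k
        have ldz := (ldDz α β j hα1 hβ).foldr hh0 L
        have ldzeta := (ldDzeta α β j hα hβ1).foldr hh0 L
        have habz : ∀ k, k ∉ L → 1 ≤ (α + Pi.single j 1 : E → ℕ) k + β k := by
          intro k hk
          simp only [Pi.add_apply]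
          by_cases hkj : k = j
          · subst hkj; rw [Pi.single_eq_same]; omega
          · rw [Pi.single_eq_of_ne hkj]
            have := hab k (by simp [hk, hkj])
            omega
        have habzeta : ∀ k, k ∉ L → 1 ≤ α k + (β + Pi.single j 1 : E → ℕ) k := by
          intro k hk
          simp only [Pi.add_apply]
          by_cases hkj : k = j
          · subst hkj; rw [Pi.single_eq_same]; omega
          · rw [Pi.single_eq_of_ne hkj]
            have := hab k (by simp [hk, hkj])
            omega
        have ihz := ih (α + Pi.single j 1) β hα1 hβ habz
        have ihzeta := ih α (β + Pi.single j 1) hα hβ1 habzeta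
        have hsumz : (∑ k, (α + Pi.single j 1 : E → ℕ) k) + ∑ k, β k = k0 + 1 := by
          have h1 : ∑ k, (α + Pi.single j 1 : E → ℕ) k = (∑ k, α k) + 1 := by
            simp only [Pi.add_apply, Finset.sum_add_distrib]
            rw [Finset.sum_pi_single']
            simp
          omega
        have hsumzeta : (∑ k, α k) + ∑ k, (β + Pi.single j 1 : E → ℕ) k = k0 + 1 := by
          have h1 : ∑ k, (β + Pi.single j 1 : E → ℕ) k = (∑ k, β k) + 1 := by
            simp only [Pi.add_apply, Finset.sum_add_distrib]
            rw [Finset.sum_pi_single']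
            simp
          omega
        set Bz := 2 ^ L.length * M / Real.sqrt h ^ (k0 + 1) with hBzdef
        have hBz0 : 0 ≤ Bz := by rw [hBzdef]; positivity
        have hBz : ∀ q', ‖(L.foldr (fun j G => G - heatOp h j G)
            (D (α + Pi.single j 1) β)) q'‖ ≤ Bz := by
          intro q'
          rw [hBzdef, le_div_iff₀ (pow_pos hs _)]
          have h1 := ihz q'
          rw [hsumz] at h1
          calc ‖_‖ * Real.sqrt h ^ (k0+1) = Real.sqrt h ^ (k0+1) * ‖_‖ := mul_comm _ _
            _ ≤ 2 ^ L.length * M := h1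
        have hBzeta : ∀ q', ‖(L.foldr (fun j G => G - heatOp h j G)
            (D α (β + Pi.single j 1))) q'‖ ≤ Bz := by
          intro q'
          rw [hBzdef, le_div_iff₀ (pow_pos hs _)]
          have h1 := ihzeta q'
          rw [hsumzeta] at h1
          calc ‖_‖ * Real.sqrt h ^ (k0+1) = Real.sqrt h ^ (k0+1) * ‖_‖ := mul_comm _ _
            _ ≤ 2 ^ L.length * M := h1
        have hdiffb : ∀ w : ℝ × ℝ, ‖G q - G (q + wv j w)‖ ≤ (|w.1| + |w.2|) * Bz := by
          intro w
          have hpt : q + wv j w = (q + w.1 • ((Pi.single j 1 : E → ℝ), (0 : E → ℝ)))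
              + w.2 • ((0 : E → ℝ), (Pi.single j 1 : E → ℝ)) := by
            unfold wv
            apply Prod.ext <;> simp
          have hd1 := ldzeta.diff_bound hBzeta
            (q + w.1 • ((Pi.single j 1 : E → ℝ), (0 : E → ℝ))) w.2
          have hd2 := ldz.diff_bound hBz q w.1
          have hsplit : ∀ a b c : ℂ, a - c = (a - b) + (b - c) := fun a b c => by ring
          calc ‖G q - G (q + wv j w)‖ = ‖G (q + wv j w) - G q‖ := norm_sub_rev _ _
            _ = ‖(G ((q + w.1 • ((Pi.single j 1 : E → ℝ), (0 : E → ℝ)))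
                  + w.2 • ((0 : E → ℝ), (Pi.single j 1 : E → ℝ)))
                - G (q + w.1 • ((Pi.single j 1 : E → ℝ), (0 : E → ℝ))))
                + (G (q + w.1 • ((Pi.single j 1 : E → ℝ), (0 : E → ℝ))) - G q)‖ := by
              rw [hpt, ← hsplit]
            _ ≤ ‖_‖ + ‖_‖ := norm_add_le _ _
            _ ≤ |w.2| * Bz + |w.1| * Bz := add_le_add hd1 hd2
            _ = (|w.1| + |w.2|) * Bz := by ring
        obtain ⟨CG, hCG⟩ := hBCG.bdd
        have hint1 : Integrable (fun w : ℝ × ℝ => G (q + wv j w) * ker h w) :=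
          integrable_integrand hh0 j hBCG.cont hCG q
        have hint0 : Integrable (fun w : ℝ × ℝ => G q * ker h w) :=
          (integrable_ker hh0).const_mul (G q)
        have e3 : (((π * h)⁻¹ : ℝ) : ℂ) * ((π * h : ℝ) : ℂ) = 1 := by
          rw [← Complex.ofReal_mul, inv_mul_cancel₀ hπh.ne']
          norm_num
        have hval : G q - heatOp h j G q
            = (((π * h)⁻¹ : ℝ) : ℂ) * ∫ w : ℝ × ℝ, (G q - G (q + wv j w)) * ker h w := by
          have e1 : ∫ w : ℝ × ℝ, (G q - G (q + wv j w)) * ker h w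
              = (∫ w : ℝ × ℝ, G q * ker h w) - ∫ w : ℝ × ℝ, G (q + wv j w) * ker h w := by
            rw [← integral_sub hint0 hint1]
            congr 1
            funext w
            ring
          have e2 : ∫ w : ℝ × ℝ, G q * ker h w = G q * ((π * h : ℝ) : ℂ) := by
            rw [integral_const_mul, integral_ker hh0]
          have e4 : (((π * h)⁻¹ : ℝ) : ℂ) * (G q * ((π * h : ℝ) : ℂ)) = G q := by
            rw [mul_comm (G q), ← mul_assoc, e3, one_mul]
          rw [heatOp_eq, e1, mul_sub, e2, e4]
        have hnormI : ‖∫ w : ℝ × ℝ, (G q - G (q + wv j w)) * ker h w‖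
            ≤ Bz * (h * Real.sqrt (π * h)) + Bz * (h * Real.sqrt (π * h)) := by
          have hb1 : ‖∫ w : ℝ × ℝ, (G q - G (q + wv j w)) * ker h w‖
              ≤ ∫ w : ℝ × ℝ, (Bz * (|w.1| * gker h w) + Bz * (|w.2| * gker h w)) := by
            refine norm_integral_le_of_norm_le
              (((integrable_absfst_gker hh0).const_mul Bz).add
                ((integrable_abssnd_gker hh0).const_mul Bz))
              (Filter.Eventually.of_forall fun w => ?_)
            rw [norm_mul, norm_ker]
            calc ‖G q - G (q + wv j w)‖ * gker h w
                ≤ ((|w.1| + |w.2|) * Bz) * gker h w :=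
                  mul_le_mul_of_nonneg_right (hdiffb w) (gker_pos w).le
              _ = Bz * (|w.1| * gker h w) + Bz * (|w.2| * gker h w) := by ring
          rwa [integral_add ((integrable_absfst_gker hh0).const_mul Bz)
            ((integrable_abssnd_gker hh0).const_mul Bz),
            integral_const_mul, integral_const_mul,
            integral_absfst_gker hh0, integral_abssnd_gker hh0] at hb1
        have hfin : ‖G q - heatOp h j G q‖
            ≤ (π * h)⁻¹ * (2 * Bz * (h * Real.sqrt (π * h))) := by
          rw [hval, norm_mul, Complex.norm_real, Real.norm_eq_abs, abs_of_pos (by positivity)]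
          calc (π * h)⁻¹ * ‖∫ w : ℝ × ℝ, (G q - G (q + wv j w)) * ker h w‖
              ≤ (π * h)⁻¹ * (Bz * (h * Real.sqrt (π * h)) + Bz * (h * Real.sqrt (π * h))) :=
                mul_le_mul_of_nonneg_left hnormI (by positivity)
            _ = (π * h)⁻¹ * (2 * Bz * (h * Real.sqrt (π * h))) := by ring
        have e5 : Real.sqrt (π * h) = Real.sqrt π * Real.sqrt h := Real.sqrt_mul Real.pi_pos.le h
        have e6 : Real.sqrt π * Real.sqrt π = π := Real.mul_self_sqrt Real.pi_pos.le
        have e7 : Real.sqrt h * Real.sqrt h = h := Real.mul_self_sqrt hh0.le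
        have e8 : (1:ℝ) ≤ Real.sqrt π := by
          rw [show (1:ℝ) = Real.sqrt 1 from (Real.sqrt_one).symm]
          exact Real.sqrt_le_sqrt hπ1
        have hsπ : (0:ℝ) < Real.sqrt π := by positivity
        have harith : Real.sqrt h ^ k0 * ((π * h)⁻¹ * (2 * Bz * (h * Real.sqrt (π * h))))
            = 2 ^ (L.length + 1) * M / Real.sqrt π := by
          rw [hBzdef, e5]
          set s := Real.sqrt h with hsdef
          set sp := Real.sqrt π with hspdef
          rw [show h = s * s from e7.symm, show π = sp * sp from e6.symm, pow_succ, pow_succ]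
          field_simp
        calc Real.sqrt h ^ k0 * ‖(G - heatOp h j G) q‖
            = Real.sqrt h ^ k0 * ‖G q - heatOp h j G q‖ := rfl
          _ ≤ Real.sqrt h ^ k0 * ((π * h)⁻¹ * (2 * Bz * (h * Real.sqrt (π * h)))) :=
              mul_le_mul_of_nonneg_left hfin (by positivity)
          _ = 2 ^ (L.length + 1) * M / Real.sqrt π := harith
          _ ≤ 2 ^ (L.length + 1) * M := by
              apply div_le_self (by positivity) e8
  -- conclude
  have hα : ∀ k, ((αβ.1 k : ℕ)) ≤ 2 := fun k => by
    have := (αβ.1 k).isLt; omega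
  have hβ : ∀ k, ((αβ.2 k : ℕ)) ≤ 2 := fun k => by
    have := (αβ.2 k).isLt; omega
  have hrepr := hrep ((∑ k, ((αβ.1 k : ℕ))) + ∑ k, ((αβ.2 k : ℕ))) _ _ rfl hα hβ
  rw [hrepr]
  have hkey := key Finset.univ.toList (fun j => ((αβ.1 j : ℕ))) (fun j => ((αβ.2 j : ℕ)))
    hα hβ (fun k hk => absurd (Finset.mem_toList.mpr (Finset.mem_univ k)) hk) p
  rw [Finset.length_toList, Finset.card_univ] at hkey
  exact hkey
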